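/- Let v be a regular interior vertex of a terrain with height 0 (after normalization), and let L be a triangulation of the link of v by d−3 diagonals. If L contains an irregular ear—an ear acb where t(a) and t(b) have the same sign and t(c) has the opposite sign—then either the lower link or the upper link of v consists of the single vertex c. Consequently, L has at most one irregular ear, and since every triangulation of a polygon on d ≥ 4 vertices has at least two ears, L has at least one regular ear. -/
import Mathlib


open Finset

/-- A subset of the cyclic vertex set `ZMod d` is an *arc* if it consists of
consecutive elements. -/
def IsArc (d : ℕ) (S : Set (ZMod d)) : Prop :=
  ∃ a : ZMod d, ∃ n : ℕ, S = {x | ∃ k : ℕ, k < n ∧ x = a + (k : ZMod d)}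

/-- An edge of the polygon with vertex set `ZMod d`. -/
def IsPolygonEdge (d : ℕ) (e : Finset (ZMod d)) : Prop :=
  ∃ i : ZMod d, e = {i, i + 1}

open scoped Classical in
/-- The diagonals used by a set `Tri` of triangles. -/
noncomputable def diagonalsOf (d : ℕ) (Tri : Finset (Finset (ZMod d))) :
    Finset (Finset (ZMod d)) :=
  (Tri.biUnion fun t => t.powersetCard 2).filter fun e => ¬ IsPolygonEdge d e

open scoped Classical in
/-- `Tri` is a (combinatorial) triangulation of the polygon on the `d`
cyclically ordered vertices `ZMod d`. -/
def IsPolygonTriangulation (d : ℕ) (Tri : Finset (Finset (ZMod d))) : Prop :=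
  Tri.card = d - 2 ∧ (∀ t ∈ Tri, t.card = 3) ∧
  (diagonalsOf d Tri).card = d - 3 ∧
  (∀ i : ZMod d, (Tri.filter fun t => ({i, i + 1} : Finset (ZMod d)) ⊆ t).card = 1) ∧
  (∀ e ∈ diagonalsOf d Tri, (Tri.filter fun t => e ⊆ t).card = 2)

/-- The ear `a c b` with `a = i`, `c = i + 1`, `b = i + 2` is *irregular* if the
heights of `a` and `b` have the same sign and the height of `c` the opposite
sign (`f` records the heights of the link vertices relative to the removed
vertex `v`, normalized so that `v` has height `0`). -/
def IrregularEarAt (d : ℕ) (f : ZMod d → ℝ) (i : ZMod d) : Prop :=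
  (0 < f i ∧ 0 < f (i + 2) ∧ f (i + 1) < 0) ∨
  (f i < 0 ∧ f (i + 2) < 0 ∧ 0 < f (i + 1))


lemma arc_eq_singleton {d : ℕ} [NeZero d] {S : Set (ZMod d)} (hS : IsArc d S)
    {x : ZMod d} (hx : x ∈ S) (h1 : x - 1 ∉ S) (h2 : x + 1 ∉ S) : S = {x} := by
  obtain ⟨a, n, rfl⟩ := hS
  obtain ⟨k0, hk0, hxk⟩ := hx
  by_cases hn : n < d
  · rcases Nat.eq_zero_or_pos k0 with h0 | h0
    · subst h0
      simp only [Nat.cast_zero, add_zero] at hxk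
      have hn1 : n = 1 := by
        by_contra h
        exact h2 ⟨1, by omega, by rw [hxk]; norm_num⟩
      subst hn1
      ext y
      simp only [Set.mem_setOf_eq, Nat.lt_one_iff, Set.mem_singleton_iff, hxk]
      constructor
      · rintro ⟨k, rfl, rfl⟩; simp
      · rintro rfl; exact ⟨0, rfl, by simp⟩
    · exfalso
      refine h1 ⟨k0 - 1, by omega, ?_⟩
      have : ((k0 - 1 : ℕ) : ZMod d) = (k0 : ZMod d) - 1 := by
        push_cast [h0]; ring
      rw [this, hxk]; ring
  · exfalso
    refine h2 ⟨(x + 1 - a).val, lt_of_lt_of_le (ZMod.val_lt _) (le_of_not_gt hn), ?_⟩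
    simp [ZMod.natCast_val, ZMod.cast_id]

open scoped Classical in
/-- **Irregular ears of a link triangulation.**
Let `v` be a regular interior vertex of height `0` whose link is the cycle
`ZMod d` with (nonzero) relative heights `f`, and let `Tri` be a triangulation
of the link polygon.  If `Tri` contains an irregular ear `a c b`
(`a = i`, `c = i + 1`, `b = i + 2`), then the lower or the upper link of `v`
consists of the single vertex `c`.  Consequently `Tri` contains at most one
irregular ear and — since every triangulation of a polygon on `d ≥ 4` vertices
has at least two ears — at least one regular ear. -/
theorem irregular_ear_unique_and_regular_ear_exists
    (d : ℕ) [NeZero d] (hd : 4 ≤ d)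
    (f : ZMod d → ℝ) (hnz : ∀ i, f i ≠ 0)
    -- `v` is regular: lower and upper link are nonempty arcs of the cycle
    (hlow : ({i : ZMod d | f i < 0}).Nonempty ∧ IsArc d {i : ZMod d | f i < 0})
    (hup : ({i : ZMod d | 0 < f i}).Nonempty ∧ IsArc d {i : ZMod d | 0 < f i})
    (Tri : Finset (Finset (ZMod d))) (hTri : IsPolygonTriangulation d Tri)
    -- the two-ears theorem for polygon triangulations
    (hEars : 2 ≤ (Tri.filter fun t => ∃ i : ZMod d, t = {i, i + 1, i + 2}).card) :
    (∀ i : ZMod d, ({i, i + 1, i + 2} : Finset (ZMod d)) ∈ Tri → IrregularEarAt d f i →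
      ({j : ZMod d | f j < 0} = {i + 1} ∨ {j : ZMod d | 0 < f j} = {i + 1})) ∧
    (Tri.filter fun t => ∃ i : ZMod d, t = {i, i + 1, i + 2} ∧ IrregularEarAt d f i).card ≤ 1 ∧
    (∃ t ∈ Tri, ∃ i : ZMod d, t = {i, i + 1, i + 2} ∧ ¬ IrregularEarAt d f i) := by
    classical
  have key : ∀ i : ZMod d, IrregularEarAt d f i →
      ({j : ZMod d | f j < 0} = {i + 1} ∨ {j : ZMod d | 0 < f j} = {i + 1}) := by
    intro i hIrr
    rcases hIrr with ⟨ha, hb, hc⟩ | ⟨ha, hb, hc⟩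
    · left
      apply arc_eq_singleton hlow.2 (x := i + 1)
      · exact hc
      · simp only [add_sub_cancel_right, Set.mem_setOf_eq, not_lt]
        exact ha.le
      · show ¬ f (i + 1 + 1) < 0
        have h : i + 1 + 1 = i + 2 := by ring
        rw [h]; exact not_lt.2 hb.le
    · right
      apply arc_eq_singleton hup.2 (x := i + 1)
      · exact hc
      · simp only [add_sub_cancel_right, Set.mem_setOf_eq, not_lt]
        exact ha.le
      · show ¬ 0 < f (i + 1 + 1)
        have h : i + 1 + 1 = i + 2 := by ring
        rw [h]; exact not_lt.2 hb.le
  have h1 : (1 : ZMod d) ≠ 0 := by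
    intro h
    have hdvd : d ∣ 1 := (ZMod.natCast_eq_zero_iff 1 d).1 (by exact_mod_cast h)
    have := Nat.le_of_dvd one_pos hdvd; omega
  have h2 : (2 : ZMod d) ≠ 0 := by
    intro h
    have hdvd : d ∣ 2 := (ZMod.natCast_eq_zero_iff 2 d).1 (by exact_mod_cast h)
    have := Nat.le_of_dvd two_pos hdvd; omega
  have mixed : ∀ i j : ZMod d, {x : ZMod d | f x < 0} = {i + 1} →
      {x : ZMod d | 0 < f x} = {j + 1} → False := by
    intro i j hI hJ
    have hall : ∀ x : ZMod d, x = i + 1 ∨ x = j + 1 := by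
      intro x
      rcases lt_or_gt_of_ne (hnz x) with h | h
      · left; have hx : x ∈ {y : ZMod d | f y < 0} := h
        rw [hI] at hx; exact hx
      · right; have hx : x ∈ {y : ZMod d | 0 < f y} := h
        rw [hJ] at hx; exact hx
    have e1 : i = j + 1 := by
      rcases hall i with h | h
      · exact absurd (by linear_combination -h : (1 : ZMod d) = 0) h1
      · exact h
    have e2 : i + 2 = j + 1 := by
      rcases hall (i + 2) with h | h
      · exact absurd (by linear_combination h : (1 : ZMod d) = 0) h1
      · exact h
    exact h2 (by linear_combination e2.trans e1.symm)
  have same : ∀ i j : ZMod d, IrregularEarAt d f i → IrregularEarAt d f j → i = j := by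
    intro i j hi hj
    have hij : i + 1 = j + 1 := by
      rcases key i hi with hI | hI <;> rcases key j hj with hJ | hJ
      · exact Set.singleton_eq_singleton_iff.1 (hI.symm.trans hJ)
      · exact (mixed i j hI hJ).elim
      · exact (mixed j i hJ hI).elim
      · exact Set.singleton_eq_singleton_iff.1 (hI.symm.trans hJ)
    exact add_right_cancel hij
  have hle : (Tri.filter fun t => ∃ i : ZMod d,
      t = {i, i + 1, i + 2} ∧ IrregularEarAt d f i).card ≤ 1 := by
    apply Finset.card_le_one.2
    intro t1 ht1 t2 ht2
    simp only [Finset.mem_filter] at ht1 ht2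
    obtain ⟨-, i, rfl, hi⟩ := ht1
    obtain ⟨-, j, rfl, hj⟩ := ht2
    rw [same i j hi hj]
  refine ⟨fun i _ h => key i h, hle, ?_⟩
  have hnsub : ¬ (Tri.filter fun t => ∃ i : ZMod d, t = {i, i + 1, i + 2}) ⊆
      (Tri.filter fun t => ∃ i : ZMod d, t = {i, i + 1, i + 2} ∧ IrregularEarAt d f i) := by
    intro h
    have := Finset.card_le_card h
    omega
  obtain ⟨t, htE, htI⟩ := Finset.not_subset.1 hnsub
  simp only [Finset.mem_filter] at htE
  obtain ⟨htTri, i, rfl⟩ := htE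
  refine ⟨_, htTri, i, rfl, ?_⟩
  intro hIrr
  exact htI (Finset.mem_filter.2 ⟨htTri, i, rfl, hIrr⟩)
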